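/- Let f ∈ S = K[x_1,…,x_n] be a nonzero homogeneous polynomial of positive degree with factorization f = f_1^{a_1} ⋯ f_s^{a_s} into pairwise non-associated homogeneous irreducible polynomials f_1,…,f_s (a_i ≥ 1), ordered so that deg f_1 ≤ ⋯ ≤ deg f_s, and let I = (f) be the principal ideal it generates. Then for every k ≥ 1, Ass(I^k) = { (f_1),…,(f_s) } and v(I^k) = k·deg(f) − deg(f_s) = α(I)·k − deg(f_s). -/

import Mathlib

open MvPolynomial

noncomputable section

/-- The set of associated primes `Ass(L)` of the quotient by an ideal `L`. -/
def assOf {A : Type} [CommRing A] (L : Ideal A) : Set (Ideal A) :=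
  associatedPrimes A (A ⧸ L)

/-- `𝔄` is the stable value `Ass^∞(L)` of `Ass(L^k)` for all large `k`. -/
def IsStableAssValue {A : Type} [CommRing A] (L : Ideal A) (𝔄 : Set (Ideal A)) : Prop :=
  ∃ N : ℕ, ∀ k : ℕ, N ≤ k → assOf (L ^ k) = 𝔄

/-- `Ass^*(L) = ⋃_{k ≥ 1} Ass(L^k)`. -/
def assStar {A : Type} [CommRing A] (L : Ideal A) : Set (Ideal A) :=
  {p | ∃ k : ℕ, 1 ≤ k ∧ p ∈ assOf (L ^ k)}

/-- The local v-number `v_p(L)`: the least degree of a homogeneous `f` with `(L : f) = p`. -/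
def vnum {σ K : Type} [Field K] (L p : Ideal (MvPolynomial σ K)) : ℕ :=
  sInf {d : ℕ | ∃ f : MvPolynomial σ K, f.IsHomogeneous d ∧ L.colon (Ideal.span {f}) = p}

/-- The v-number `v(L) = min_{p ∈ Ass(L)} v_p(L)`. -/
def vnumber {σ K : Type} [Field K] (L : Ideal (MvPolynomial σ K)) : ℕ :=
  sInf {d : ℕ | ∃ p ∈ assOf L, ∃ f : MvPolynomial σ K,
    f.IsHomogeneous d ∧ L.colon (Ideal.span {f}) = p}

/-- The initial degree `α(L)`: the least `d` such that `L` contains a nonzero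
homogeneous element of degree `d`. -/
def alphaDeg {σ K : Type} [Field K] (L : Ideal (MvPolynomial σ K)) : ℕ :=
  sInf {d : ℕ | ∃ f ∈ L, f ≠ 0 ∧ MvPolynomial.IsHomogeneous f d}

/-- A graded (homogeneous) ideal: one containing all homogeneous components
of each of its elements. -/
def IsGradedIdeal {σ K : Type} [Field K] (I : Ideal (MvPolynomial σ K)) : Prop :=
  ∀ f ∈ I, ∀ d : ℕ, homogeneousComponent d f ∈ I

/-- A monomial ideal: an ideal generated by monomials. -/
def IsMonomialIdeal {σ K : Type} [Field K] (I : Ideal (MvPolynomial σ K)) : Prop :=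
  ∃ G : Set (σ →₀ ℕ), I = Ideal.span ((fun a => (monomial a (1 : K))) '' G)


section AuxLemmas

lemma ann_mk_eq_colon {A : Type*} [CommRing A] (L : Ideal A) (x : A) :
    (Submodule.span A {(Ideal.Quotient.mk L x : A ⧸ L)}).annihilator
      = L.colon (Ideal.span {x}) := by
  ext y
  rw [Submodule.mem_annihilator_span_singleton, Ideal.mem_colon_span_singleton]
  have : y • (Ideal.Quotient.mk L x) = Ideal.Quotient.mk L (y * x) := rfl
  rw [this, Ideal.Quotient.eq_zero_iff_mem]

lemma assOf_iff {A : Type} [CommRing A] [IsNoetherianRing A] (L : Ideal A) (p : Ideal A) :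
    p ∈ assOf L ↔ p.IsPrime ∧ ∃ x : A, p = L.colon (Ideal.span {x}) := by
  constructor
  · intro h
    obtain ⟨hp, x, hx⟩ := (isAssociatedPrime_iff).mp h
    obtain ⟨x', rfl⟩ := Ideal.Quotient.mk_surjective x
    refine ⟨hp, x', ?_⟩
    rw [hx, ← ann_mk_eq_colon]
    ext y
    simp [Submodule.mem_colon, Submodule.mem_annihilator_span_singleton]
  · rintro ⟨hp, x, hx⟩
    refine (isAssociatedPrime_iff).mpr ⟨hp, Ideal.Quotient.mk L x, ?_⟩
    rw [hx, ← ann_mk_eq_colon]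
    ext y
    simp [Submodule.mem_colon, Submodule.mem_annihilator_span_singleton]

lemma colon_mul_right {A : Type*} [CommRing A] [IsDomain A] (a b : A) (hb : b ≠ 0) :
    (Ideal.span {a * b}).colon (Ideal.span {b}) = Ideal.span {a} := by
  ext y
  rw [Ideal.mem_colon_span_singleton, Ideal.mem_span_singleton, Ideal.mem_span_singleton]
  constructor
  · intro h; exact (mul_dvd_mul_iff_right hb).mp h
  · intro h; exact mul_dvd_mul h dvd_rfl

lemma ass_span_prod {A : Type} [CommRing A] [IsDomain A] [IsNoetherianRing A] {s : ℕ}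
    (g : Fin s → A) (c : Fin s → ℕ) (hp : ∀ i, Prime (g i)) (hc : ∀ i, 1 ≤ c i) :
    assOf (Ideal.span {∏ i, g i ^ c i}) = Set.range fun i => Ideal.span {g i} := by
  set h : A := ∏ i, g i ^ c i with hh
  have hq : ∀ i : Fin s,
      h = g i * ((g i ^ (c i - 1)) * ∏ j ∈ Finset.univ.erase i, g j ^ c j) := by
    intro i
    have h1 : c i = (c i - 1) + 1 := by have := hc i; omega
    rw [hh, ← Finset.mul_prod_erase Finset.univ _ (Finset.mem_univ i), h1, pow_succ',
      mul_assoc]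
    simp
  have hq0 : ∀ i : Fin s, (g i ^ (c i - 1)) * ∏ j ∈ Finset.univ.erase i, g j ^ c j ≠ 0 :=
    fun i => mul_ne_zero (pow_ne_zero _ (hp i).ne_zero)
      (Finset.prod_ne_zero_iff.mpr fun j _ => pow_ne_zero _ (hp j).ne_zero)
  ext p
  rw [assOf_iff]
  constructor
  · rintro ⟨hpp, x, hx⟩
    have hx0 : ¬ h ∣ x := by
      intro hdvd
      apply hpp.ne_top
      rw [hx, Ideal.eq_top_iff_one, Ideal.mem_colon_span_singleton, one_mul]
      exact Ideal.mem_span_singleton.mpr hdvd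
    have hhp : h ∈ p := by
      rw [hx, Ideal.mem_colon_span_singleton]
      exact Ideal.mem_span_singleton.mpr (Dvd.intro x rfl)
    obtain ⟨i, -, hgi⟩ := (Ideal.IsPrime.prod_mem_iff (hp := hpp)).mp (hh ▸ hhp)
    have hgi' : g i ∈ p := hpp.mem_of_pow_mem _ hgi
    refine ⟨i, ?_⟩
    set q := (g i ^ (c i - 1)) * ∏ j ∈ Finset.univ.erase i, g j ^ c j with hqdef
    have hqx : q ∣ x := by
      have h2 : h ∣ g i * x := by
        have h3 := hgi'
        rw [hx, Ideal.mem_colon_span_singleton] at h3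
        exact Ideal.mem_span_singleton.mp h3
      rw [hq i] at h2
      exact (mul_dvd_mul_iff_left (hp i).ne_zero).mp h2
    obtain ⟨x', rfl⟩ := hqx
    have hgx' : ¬ g i ∣ x' := by
      intro hd
      obtain ⟨t, rfl⟩ := hd
      exact hx0 ⟨t, by rw [hq i]; ring⟩
    apply le_antisymm
    · rw [Ideal.span_le, Set.singleton_subset_iff]; exact hgi'
    · intro y hy
      rw [hx, Ideal.mem_colon_span_singleton, Ideal.mem_span_singleton, hq i] at hy
      have h2 : g i * q ∣ (y * x') * q := by
        rwa [show y * (q * x') = (y * x') * q from by ring] at hy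
      have h3 : g i ∣ y * x' := (mul_dvd_mul_iff_right (hq0 i)).mp h2
      rw [Ideal.mem_span_singleton]
      rcases (hp i).2.2 _ _ h3 with h4 | h4
      · exact h4
      · exact absurd h4 hgx'
  · rintro ⟨i, rfl⟩
    refine ⟨(Ideal.span_singleton_prime (hp i).ne_zero).mpr (hp i),
      (g i ^ (c i - 1)) * ∏ j ∈ Finset.univ.erase i, g j ^ c j, ?_⟩
    rw [hq i, colon_mul_right _ _ (hq0 i)]

lemma hc_total_ne_zero {σ K : Type} [CommSemiring K]
    {c : MvPolynomial σ K} (hc : c ≠ 0) :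
    homogeneousComponent c.totalDegree c ≠ 0 := by
  have hT : c.totalDegree = c.support.sup Finsupp.degree := by
    rw [totalDegree]
    rfl
  obtain ⟨u, hu, hdeg⟩ := Finset.exists_mem_eq_sup c.support
    (support_nonempty.mpr hc) Finsupp.degree
  intro h0
  have : coeff u (homogeneousComponent c.totalDegree c) = coeff u c := by
    rw [coeff_homogeneousComponent, if_pos (by rw [hT, hdeg])]
  rw [h0] at this
  exact (mem_support_iff.mp hu) (by simpa using this.symm)

lemma comp_mul_top {σ K : Type} [CommRing K] {h c : MvPolynomial σ K} {N : ℕ}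
    (hh : h.IsHomogeneous N) :
    homogeneousComponent (N + c.totalDegree) (h * c)
      = h * homogeneousComponent c.totalDegree c := by
  set t := c.totalDegree with ht
  have hdec : h * c = ∑ j ∈ Finset.range (t + 1), h * homogeneousComponent j c := by
    rw [← Finset.mul_sum, sum_homogeneousComponent]
  rw [hdec, map_sum]
  have hterm : ∀ j ∈ Finset.range (t + 1),
      homogeneousComponent (N + t) (h * homogeneousComponent j c)
        = if N + t = N + j then h * homogeneousComponent j c else 0 := by
    intro j _
    exact homogeneousComponent_of_mem
      ((mem_homogeneousSubmodule _ _).mpr (hh.mul (homogeneousComponent_isHomogeneous j c)))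
  rw [Finset.sum_congr rfl hterm]
  simp only [add_right_inj]
  rw [Finset.sum_ite_eq (Finset.range (t + 1)) t (fun j => h * homogeneousComponent j c),
    if_pos (Finset.self_mem_range_succ t)]

lemma deg_le_of_dvd {σ K : Type} [CommRing K] [IsDomain K]
    {h w : MvPolynomial σ K} {N m : ℕ}
    (hh : h.IsHomogeneous N) (hw : w.IsHomogeneous m) (h0 : w ≠ 0) (hdvd : h ∣ w) :
    N ≤ m := by
  obtain ⟨c, rfl⟩ := hdvd
  have hc0 : c ≠ 0 := fun hc => h0 (by rw [hc, mul_zero])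
  have hkey : homogeneousComponent (N + c.totalDegree) (h * c) ≠ 0 := by
    rw [comp_mul_top hh]
    exact mul_ne_zero (fun hh0 => h0 (by rw [hh0, zero_mul])) (hc_total_ne_zero hc0)
  have hle : N + c.totalDegree ≤ (h * c).totalDegree := by
    by_contra hlt
    exact hkey (homogeneousComponent_eq_zero _ _ (by omega))
  rw [hw.totalDegree h0] at hle
  omega

end AuxLemmas


/-- Example 5.1: let `f = f_1^{a_1} ⋯ f_s^{a_s}` be a nonzero homogeneous
polynomial of positive degree, factored into pairwise non-associated homogeneous irreducible
polynomials of nondecreasing degrees, and `I = (f)`.  Then for every `k ≥ 1`,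
`Ass(I^k) = {(f_1),…,(f_s)}` and `v(I^k) = k·deg(f) − deg(f_s) = α(I)·k − deg(f_s)`. -/
theorem stmt15 {K : Type} [Field K] {n s : ℕ} (hs : 1 ≤ s)
    (g : Fin s → MvPolynomial (Fin n) K) (e d : Fin s → ℕ)
    (hirr : ∀ i, Irreducible (g i))
    (hhom : ∀ i, (g i).IsHomogeneous (d i))
    (hmono : Monotone d)
    (hnonassoc : ∀ i j, i ≠ j → ¬ Associated (g i) (g j))
    (he : ∀ i, 1 ≤ e i)
    (f : MvPolynomial (Fin n) K) (hf : f = ∏ i, g i ^ e i)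
    (hf0 : f ≠ 0) (hfhom : ∃ D : ℕ, 0 < D ∧ f.IsHomogeneous D) :
    ∀ k : ℕ, 1 ≤ k →
      assOf (Ideal.span {f} ^ k) =
        Set.range (fun i => Ideal.span {g i}) ∧
      (vnumber (Ideal.span {f} ^ k) : ℤ) =
        (k : ℤ) * (f.totalDegree : ℤ) - (d ⟨s - 1, by omega⟩ : ℤ) ∧
      (vnumber (Ideal.span {f} ^ k) : ℤ) =
        (alphaDeg (Ideal.span {f}) : ℤ) * k - (d ⟨s - 1, by omega⟩ : ℤ) := by
  intro k hk
  classical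
  have hgp : ∀ i, Prime (g i) := fun i => (hirr i).prime
  set last : Fin s := ⟨s - 1, by omega⟩ with hlastdef
  set c : Fin s → ℕ := fun i => e i * k with hcdef
  have hc : ∀ i, 1 ≤ c i := fun i => Nat.mul_le_mul (he i) hk
  have hfk : f ^ k = ∏ i, g i ^ c i := by
    rw [hf, ← Finset.prod_pow]
    exact Finset.prod_congr rfl fun i _ => (pow_mul _ _ _).symm
  set D : ℕ := ∑ i, d i * e i with hDdef
  have hfD : f.IsHomogeneous D := by
    rw [hf]
    exact IsHomogeneous.prod _ _ _ fun i _ => (hhom i).pow (e i)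
  have hftd : f.totalDegree = D := hfD.totalDegree hf0
  have hfkhom : (f ^ k).IsHomogeneous (D * k) := hfD.pow k
  have hass : assOf (Ideal.span {f} ^ k) = Set.range fun i => Ideal.span {g i} := by
    rw [Ideal.span_singleton_pow, hfk]
    exact ass_span_prod g c hgp hc
  -- the distinguished factor
  set q : MvPolynomial (Fin n) K :=
    g last ^ (c last - 1) * ∏ j ∈ Finset.univ.erase last, g j ^ c j with hqdef
  have hq0 : q ≠ 0 :=
    mul_ne_zero (pow_ne_zero _ (hgp last).ne_zero)
      (Finset.prod_ne_zero_iff.mpr fun j _ => pow_ne_zero _ (hgp j).ne_zero)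
  have hfactor : f ^ k = g last * q := by
    have h1 : c last = (c last - 1) + 1 := by have := hc last; omega
    rw [hfk, ← Finset.mul_prod_erase Finset.univ _ (Finset.mem_univ last), hqdef, h1,
      pow_succ', mul_assoc]
    simp
  have hqhom : q.IsHomogeneous
      (d last * (c last - 1) + ∑ j ∈ Finset.univ.erase last, d j * c j) :=
    ((hhom last).pow _).mul (IsHomogeneous.prod _ _ _ fun j _ => (hhom j).pow _)
  have hsumall : ∑ j, d j * c j = D * k := by
    rw [hDdef, Finset.sum_mul]
    exact Finset.sum_congr rfl fun j _ => (mul_assoc _ _ _).symm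
  have hsplit : d last * c last + ∑ j ∈ Finset.univ.erase last, d j * c j = D * k := by
    rw [← hsumall]
    exact Finset.add_sum_erase Finset.univ (fun j => d j * c j) (Finset.mem_univ last)
  have hdc : d last * c last = d last * (c last - 1) + d last := by
    have h1 : c last = (c last - 1) + 1 := by have := hc last; omega
    conv_lhs => rw [h1]
    ring
  have hdle : d last ≤ D * k := by
    have h1 : d last ≤ d last * c last := Nat.le_mul_of_pos_right _ (hc last)
    omega
  have hQ : d last * (c last - 1) + ∑ j ∈ Finset.univ.erase last, d j * c j
      = D * k - d last := by omega
  have hV : vnumber (Ideal.span {f} ^ k) = D * k - d last := by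
    unfold vnumber
    have hmem : (D * k - d last) ∈ {v : ℕ | ∃ p ∈ assOf (Ideal.span {f} ^ k),
        ∃ w : MvPolynomial (Fin n) K, w.IsHomogeneous v ∧
          (Ideal.span {f} ^ k).colon (Ideal.span {w}) = p} := by
      refine ⟨Ideal.span {g last}, by rw [hass]; exact ⟨last, rfl⟩, q, hQ ▸ hqhom, ?_⟩
      rw [Ideal.span_singleton_pow, hfactor, colon_mul_right _ _ hq0]
    refine le_antisymm (Nat.sInf_le hmem) (le_csInf ⟨_, hmem⟩ ?_)
    rintro v ⟨p, hpmem, w, hwhom, hcolon⟩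
    rw [hass] at hpmem
    obtain ⟨i, hpi⟩ := hpmem
    replace hcolon : (Ideal.span {f} ^ k).colon (Ideal.span {w}) = Ideal.span {g i} :=
      hcolon.trans hpi.symm
    have hprime : (Ideal.span {g i}).IsPrime :=
      (Ideal.span_singleton_prime (hgp i).ne_zero).mpr (hgp i)
    have hw0 : w ≠ 0 := by
      rintro rfl
      apply hprime.ne_top
      rw [← hcolon, Ideal.eq_top_iff_one, Ideal.mem_colon_span_singleton, mul_zero]
      exact zero_mem _
    have hgi : g i * w ∈ Ideal.span {f ^ k} := by
      rw [← Ideal.span_singleton_pow, ← Ideal.mem_colon_span_singleton, hcolon]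
      exact Ideal.subset_span rfl
    have hdvd : f ^ k ∣ g i * w := Ideal.mem_span_singleton.mp hgi
    have hle := deg_le_of_dvd hfkhom ((hhom i).mul hwhom)
      (mul_ne_zero (hgp i).ne_zero hw0) hdvd
    have hdi : d i ≤ d last := hmono (by rw [Fin.le_def]; simp [hlastdef]; omega)
    omega
  have halpha : alphaDeg (Ideal.span {f}) = D := by
    unfold alphaDeg
    have hmem : D ∈ {v : ℕ | ∃ x ∈ Ideal.span {f}, x ≠ 0 ∧ x.IsHomogeneous v} :=
      ⟨f, Ideal.subset_span rfl, hf0, hfD⟩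
    refine le_antisymm (Nat.sInf_le hmem) (le_csInf ⟨_, hmem⟩ ?_)
    rintro v ⟨x, hx, hx0, hxhom⟩
    exact deg_le_of_dvd hfD hxhom hx0 (Ideal.mem_span_singleton.mp hx)
  have hg2 : (vnumber (Ideal.span {f} ^ k) : ℤ) = (k : ℤ) * (f.totalDegree : ℤ) - (d last : ℤ) := by
    rw [hV, hftd]
    have := hdle
    push_cast [Nat.cast_sub hdle]
    ring
  have hg3 : (vnumber (Ideal.span {f} ^ k) : ℤ) = (alphaDeg (Ideal.span {f}) : ℤ) * k - (d last : ℤ) := by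
    rw [hV, halpha]
    push_cast [Nat.cast_sub hdle]
    ring
  exact ⟨hass, hg2, hg3⟩
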